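/- Loop-invariant base case, opposite direction: If v1 ≥ 0, v2 ≤ 0, and safeDist_o(v1, v2) ≤ x2 − x1, then the opposite-direction loop invariant holds in its stopping-distance part: x1 + v1²/(2·a_minBrake) ≤ x2 − v2²/(2·a_minBrake). -/
import Mathlib

/-- RSS opposite-direction safe distance. -/
noncomputable def safeDistO (aminBrake amaxAccel ρ v1 v2 : ℝ) : ℝ :=
  ((v1 + (v1 + ρ * amaxAccel)) / 2) * ρ + (v1 + ρ * amaxAccel)^2 / (2 * aminBrake)
  + ((|v2| + (|v2| + ρ * amaxAccel)) / 2) * ρ + (|v2| + ρ * amaxAccel)^2 / (2 * aminBrake)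

/-- Loop-invariant base case, opposite direction. -/
theorem loop_invariant_base_opposite
    (aminBrake amaxBrake amaxAccel ρ : ℝ)
    (hmin : 0 < aminBrake) (hminmax : aminBrake < amaxBrake)
    (hacc : 0 < amaxAccel) (hρ : 0 < ρ)
    (x1 x2 v1 v2 : ℝ)
    (hv1 : v1 ≥ 0) (hv2 : v2 ≤ 0)
    (hdist : safeDistO aminBrake amaxAccel ρ v1 v2 ≤ x2 - x1) :
    x1 + v1^2 / (2 * aminBrake) ≤ x2 - v2^2 / (2 * aminBrake) := by
  unfold safeDistO at hdist
  rw [abs_of_nonpos hv2] at hdist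
  have h1 : v1^2/(2*aminBrake) ≤ (v1+ρ*amaxAccel)^2/(2*aminBrake) := by
    gcongr
    nlinarith [mul_pos hρ hacc]
  have h2 : v2^2/(2*aminBrake) ≤ (-v2+ρ*amaxAccel)^2/(2*aminBrake) := by
    have : v2^2 ≤ (-v2+ρ*amaxAccel)^2 := by nlinarith [mul_pos hρ hacc]
    exact div_le_div_of_nonneg_right this (by positivity) |>.trans_eq rfl
  have h3 : 0 ≤ (v1 + (v1 + ρ * amaxAccel)) / 2 * ρ := by positivity
  have h4 : 0 ≤ (-v2 + (-v2 + ρ * amaxAccel)) / 2 * ρ := by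
    have : 0 ≤ -v2 := by linarith
    positivity
  linarith
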